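/- Let G be a graph on [n]. Then the binomial edge ideal J_G is a radical ideal, and J_G = ⋂_{T ∈ C(G)} P_T(G), where C(G) is the set of subsets T ⊆ [n] with the cut point property for G. -/

import Mathlib

open MvPolynomial

section Defs

variable (K : Type*) [Field K] {V : Type*} [Fintype V] [DecidableEq V]

/-- The variable `x_i`. -/
noncomputable def xv (i : V) : MvPolynomial (Fin 2 × V) K := X (0, i)

/-- The variable `y_i`. -/
noncomputable def yv (i : V) : MvPolynomial (Fin 2 × V) K := X (1, i)

/-- The binomial `x_i y_j - x_j y_i`. -/
noncomputable def binom (i j : V) : MvPolynomial (Fin 2 × V) K :=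
  xv K i * yv K j - xv K j * yv K i

/-- The binomial edge ideal `J_G` of a simple graph `G`. -/
noncomputable def beIdeal (G : SimpleGraph V) : Ideal (MvPolynomial (Fin 2 × V) K) :=
  Ideal.span { f | ∃ i j, G.Adj i j ∧ f = binom K i j }

/-- The graph `G - T`: delete the vertices of `T` (kept as isolated vertices). -/
def delV (G : SimpleGraph V) (T : Finset V) : SimpleGraph V where
  Adj i j := G.Adj i j ∧ i ∉ T ∧ j ∉ T
  symm := ⟨fun i j h => ⟨h.1.symm, h.2.2, h.2.1⟩⟩
  loopless := ⟨fun i h => G.loopless.irrefl i h.1⟩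

/-- `c_G(T)`: the number of connected components of `G - T`. -/
noncomputable def cCount (G : SimpleGraph V) (T : Finset V) : ℕ :=
  Nat.card {c : (delV G T).ConnectedComponent //
    ∃ v, v ∉ T ∧ (delV G T).connectedComponentMk v = c}

/-- The prime ideal `P_T(G) = (x_i, y_i : i ∈ T) + J_{G̃₁} + ⋯ + J_{G̃_c}`,
where the `G̃ᵢ` are complete graphs on the components of `G - T`. -/
noncomputable def PTIdeal (G : SimpleGraph V) (T : Finset V) :
    Ideal (MvPolynomial (Fin 2 × V) K) :=
  Ideal.span ({ f | ∃ i ∈ T, f = xv K i ∨ f = yv K i } ∪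
    { f | ∃ i j, i ∉ T ∧ j ∉ T ∧ i ≠ j ∧ (delV G T).Reachable i j ∧ f = binom K i j })

/-- `T` has the cut point property for `G`. -/
def hasCutPointProperty (G : SimpleGraph V) (T : Finset V) : Prop :=
  ∀ i ∈ T, cCount G (T.erase i) < cCount G T

/-- The height of an ideal: the infimum of the heights of the primes containing it. -/
noncomputable def idealHeight {R : Type*} [CommRing R] (I : Ideal R) : ℕ∞ :=
  ⨅ P : {P : PrimeSpectrum R // I ≤ P.asIdeal}, Order.height P.1

end Defs
section Basic

variable {K : Type*} [Field K] {V : Type*} [Fintype V] [DecidableEq V]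

lemma binom_self (i : V) : binom K i i = 0 := by unfold binom; ring

lemma binom_anti (i j : V) : binom K j i = - binom K i j := by unfold binom; ring

lemma plucker_x (i j k : V) :
    xv K k * binom K i j = xv K i * binom K k j + xv K j * binom K i k := by
  unfold binom; ring

lemma plucker_y (i j k : V) :
    yv K k * binom K i j = yv K i * binom K k j + yv K j * binom K i k := by
  unfold binom; ring

lemma binom_mem_beIdeal {G : SimpleGraph V} {i j : V} (h : G.Adj i j) :
    binom K i j ∈ beIdeal K G :=
  Ideal.subset_span ⟨i, j, h, rfl⟩

lemma binom_mem_span_pair_left (i j : V) :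
    binom K i j ∈ Ideal.span ({xv K i, yv K i} : Set (MvPolynomial (Fin 2 × V) K)) :=
  Ideal.mem_span_pair.2 ⟨yv K j, -(xv K j), by unfold binom; ring⟩

lemma binom_mem_span_pair_right (i j : V) :
    binom K i j ∈ Ideal.span ({xv K j, yv K j} : Set (MvPolynomial (Fin 2 × V) K)) :=
  Ideal.mem_span_pair.2 ⟨-(yv K i), xv K i, by unfold binom; ring⟩

lemma span_xy_le_PT {G : SimpleGraph V} {T : Finset V} {i : V} (hi : i ∈ T) :
    Ideal.span ({xv K i, yv K i} : Set (MvPolynomial (Fin 2 × V) K)) ≤ PTIdeal K G T := by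
  rw [Ideal.span_le]
  rintro f (rfl | rfl) <;>
    exact Ideal.subset_span (Or.inl ⟨i, hi, by simp⟩)

lemma binom_mem_PT_left {G : SimpleGraph V} {T : Finset V} {i : V} (j : V) (hi : i ∈ T) :
    binom K i j ∈ PTIdeal K G T :=
  span_xy_le_PT hi (binom_mem_span_pair_left i j)

lemma binom_mem_PT_right {G : SimpleGraph V} {T : Finset V} (i : V) {j : V} (hj : j ∈ T) :
    binom K i j ∈ PTIdeal K G T :=
  span_xy_le_PT hj (binom_mem_span_pair_right i j)

lemma binom_mem_PT_reach {G : SimpleGraph V} {T : Finset V} {i j : V} (hi : i ∉ T) (hj : j ∉ T)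
    (hij : i ≠ j) (h : (delV G T).Reachable i j) : binom K i j ∈ PTIdeal K G T :=
  Ideal.subset_span (Or.inr ⟨i, j, hi, hj, hij, h, rfl⟩)

lemma beIdeal_le_PT (G : SimpleGraph V) (T : Finset V) : beIdeal K G ≤ PTIdeal K G T := by
  rw [beIdeal, Ideal.span_le]
  rintro f ⟨i, j, h, rfl⟩
  by_cases hi : i ∈ T
  · exact binom_mem_PT_left j hi
  by_cases hj : j ∈ T
  · exact binom_mem_PT_right i hj
  exact binom_mem_PT_reach hi hj h.ne (SimpleGraph.Adj.reachable ⟨h, hi, hj⟩)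

lemma beIdeal_mono {G G' : SimpleGraph V} (h : G ≤ G') : beIdeal K G ≤ beIdeal K G' := by
  rw [beIdeal, Ideal.span_le]
  rintro f ⟨i, j, hij, rfl⟩
  exact binom_mem_beIdeal (h hij)

end Basic
section Graphs

open SimpleGraph

variable {K : Type*} [Field K] {V : Type*} [Fintype V] [DecidableEq V]

lemma delV_delV (G : SimpleGraph V) (A B : Finset V) :
    delV (delV G A) B = delV G (A ∪ B) := by
  ext i j
  simp only [delV, Finset.mem_union]
  tauto

/-- `v` is isolated in `G`. -/
def IsolatedIn (G : SimpleGraph V) (v : V) : Prop := ∀ w, ¬ G.Adj v w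

lemma isolatedIn_delV_self (G : SimpleGraph V) {T : Finset V} {v : V} (hv : v ∈ T) :
    IsolatedIn (delV G T) v := fun w h => h.2.1 hv

lemma IsolatedIn.delV_keep {G : SimpleGraph V} {v : V} (h : IsolatedIn G v) (T : Finset V) :
    IsolatedIn (delV G T) v := fun w hw => h w hw.1

lemma isolatedIn_delV_singleton (G : SimpleGraph V) (v : V) :
    IsolatedIn (delV G {v}) v := fun _ h => h.2.1 (Finset.mem_singleton_self v)

lemma IsolatedIn.reachable_eq {G : SimpleGraph V} {v q : V} (h : IsolatedIn G v)
    (hr : G.Reachable v q) : v = q := by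
  obtain ⟨w⟩ := hr
  cases w with
  | nil => rfl
  | cons e _ => exact absurd e (h _)

lemma IsolatedIn.not_mem_support {G : SimpleGraph V} {v p q : V} (h : IsolatedIn G v)
    (w : G.Walk p q) (hp : p ≠ v) : v ∉ w.support := by
  induction w with
  | nil => simpa using fun e => hp e.symm
  | @cons a b c e w ih =>
    have hb : b ≠ v := fun hbv => h a (hbv ▸ e.symm)
    simp only [SimpleGraph.Walk.support_cons, List.mem_cons]
    push_neg
    exact ⟨fun hv => hp hv.symm, ih hb⟩

/-- A walk in `G - U` whose support avoids all new deleted vertices lifts to `G - U'`. -/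
lemma reachable_delV_of_avoid {G : SimpleGraph V} {U U' : Finset V} (hU : U ⊆ U')
    {p q : V} (w : (delV G U).Walk p q)
    (h : ∀ x ∈ U', x ∉ U → x ∉ w.support) : (delV G U').Reachable p q := by
  induction w with
  | nil => exact Reachable.refl _
  | @cons a b c e w ih =>
    have ha' : a ∉ U' := by
      intro haU'
      exact h a haU' e.2.1 (SimpleGraph.Walk.start_mem_support _)
    have hb' : b ∉ U' := by
      intro hbU'
      exact h b hbU' e.2.2 (by simp [SimpleGraph.Walk.support_cons])
    have hrest : ∀ x ∈ U', x ∉ U → x ∉ w.support := by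
      intro x hx hxU hxw
      exact h x hx hxU (by simp [SimpleGraph.Walk.support_cons, hxw])
    have hadj : (delV G U').Adj a b := ⟨e.1, ha', hb'⟩
    exact hadj.reachable.trans (ih hrest)

lemma IsolatedIn.reachable_delV_union {G : SimpleGraph V} {v : V} (hiso : IsolatedIn G v)
    {U : Finset V} {p q : V} (hp : p ≠ v) (h : (delV G U).Reachable p q) :
    (delV G (U ∪ {v})).Reachable p q := by
  obtain ⟨w⟩ := h
  refine reachable_delV_of_avoid Finset.subset_union_left w ?_
  intro x hx hxU
  have hxv : x = v := by
    rcases Finset.mem_union.1 hx with h1 | h1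
    · exact absurd h1 hxU
    · exact Finset.mem_singleton.1 h1
  subst hxv
  exact (hiso.delV_keep U).not_mem_support w hp

/-- The graph `G` with the neighbourhood of `v` completed to a clique. -/
def cliqueAt (G : SimpleGraph V) (v : V) : SimpleGraph V where
  Adj a b := G.Adj a b ∨ (a ≠ b ∧ G.Adj a v ∧ G.Adj b v)
  symm := by
    constructor
    rintro a b (h | ⟨h1, h2, h3⟩)
    · exact Or.inl h.symm
    · exact Or.inr ⟨h1.symm, h3, h2⟩
  loopless := by
    constructor
    rintro a (h | ⟨h1, _, _⟩)
    · exact G.loopless.irrefl a h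
    · exact h1 rfl

lemma le_cliqueAt (G : SimpleGraph V) (v : V) : G ≤ cliqueAt G v := fun _ _ h => Or.inl h

lemma cliqueAt_adj_v {G : SimpleGraph V} {v a : V} (h : (cliqueAt G v).Adj a v) :
    G.Adj a v := by
  rcases h with h | ⟨_, _, h3⟩
  · exact h
  · exact absurd h3 (G.loopless.irrefl v)

lemma reachable_delV_cliqueAt_iff {G : SimpleGraph V} {v : V} {T : Finset V} (hv : v ∉ T)
    {p q : V} :
    (delV (cliqueAt G v) T).Reachable p q ↔ (delV G T).Reachable p q := by
  constructor
  · rintro ⟨w⟩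
    induction w with
    | nil => exact Reachable.refl _
    | @cons a b c e w ih =>
      refine Reachable.trans ?_ ih
      rcases e.1 with h | ⟨_, h2, h3⟩
      · have hadj : (delV G T).Adj a b := ⟨h, e.2.1, e.2.2⟩
        exact hadj.reachable
      · have hadj1 : (delV G T).Adj a v := ⟨h2, e.2.1, hv⟩
        have hadj2 : (delV G T).Adj v b := ⟨h3.symm, hv, e.2.2⟩
        exact hadj1.reachable.trans hadj2.reachable
  · exact Reachable.mono (fun a b h => ⟨Or.inl h.1, h.2.1, h.2.2⟩)

/-- Bypass lemma: in `cliqueAt G v`, removing `v` in addition does not disconnect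
vertices other than `v`. -/
lemma reachable_delV_cliqueAt_erase {G : SimpleGraph V} {v : V} {T : Finset V} (hv : v ∈ T)
    {p q : V} (hp : p ≠ v) (hq : q ≠ v)
    (h : (delV (cliqueAt G v) (T.erase v)).Reachable p q) :
    (delV (cliqueAt G v) T).Reachable p q := by
  obtain ⟨w⟩ := h
  suffices H : ∀ n (p : V), p ≠ v → ∀ w : (delV (cliqueAt G v) (T.erase v)).Walk p q,
      w.length ≤ n → (delV (cliqueAt G v) T).Reachable p q by
    exact H w.length p hp w le_rfl
  intro n
  induction n with
  | zero =>
    intro p hp w hw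
    cases w with
    | nil => exact Reachable.refl _
    | cons e w => simp [SimpleGraph.Walk.length_cons] at hw
  | succ n ih =>
    intro p hp w hw
    cases w with
    | nil => exact Reachable.refl _
    | @cons _ b _ e w =>
      by_cases hb : b = v
      · cases w with
        | nil => exact absurd hb hq
        | @cons _ d _ e2 w2 =>
          have e2v : (delV (cliqueAt G v) (T.erase v)).Adj v d := hb ▸ e2
          have hd : d ≠ v := fun hdv => (delV (cliqueAt G v) (T.erase v)).loopless.irrefl v (hdv ▸ e2v)
          have hlen : w2.length ≤ n := by
            simp only [SimpleGraph.Walk.length_cons] at hw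
            omega
          have hrest := ih d hd w2 hlen
          by_cases hdp : d = p
          · exact hdp ▸ hrest
          · have hpv : G.Adj p v := cliqueAt_adj_v (hb ▸ e.1)
            have hdv2 : G.Adj d v := cliqueAt_adj_v e2v.1.symm
            have hpT : p ∉ T := by
              intro hpT
              exact e.2.1 (Finset.mem_erase.2 ⟨hp, hpT⟩)
            have hdT : d ∉ T := by
              intro hdT
              exact e2v.2.2 (Finset.mem_erase.2 ⟨hd, hdT⟩)
            have hadj : (delV (cliqueAt G v) T).Adj p d :=
              ⟨Or.inr ⟨fun h' => hdp h'.symm, hpv, hdv2⟩, hpT, hdT⟩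
            exact hadj.reachable.trans hrest
      · have hpT : p ∉ T := by
          intro hpT
          exact e.2.1 (Finset.mem_erase.2 ⟨hp, hpT⟩)
        have hbT : b ∉ T := by
          intro hbT
          exact e.2.2 (Finset.mem_erase.2 ⟨hb, hbT⟩)
        have hlen : w.length ≤ n := by
          simp only [SimpleGraph.Walk.length_cons] at hw
          omega
        have hadj : (delV (cliqueAt G v) T).Adj p b := ⟨e.1, hpT, hbT⟩
        exact hadj.reachable.trans (ih b hb w hlen)

lemma adj_of_cliqueish {G : SimpleGraph V}
    (hG : ∀ a b c, G.Adj a b → G.Adj b c → a ≠ c → G.Adj a c)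
    {p q : V} (h : (delV G ∅).Reachable p q) (hpq : p ≠ q) : G.Adj p q := by
  obtain ⟨w⟩ := h
  induction w with
  | nil => exact absurd rfl hpq
  | @cons a b c e w ih =>
    by_cases hbc : b = c
    · exact hbc ▸ e.1
    · exact hG a b c e.1 (ih hbc) hpq

end Graphs
section KillV

open SimpleGraph

variable {K : Type*} [Field K] {V : Type*} [Fintype V] [DecidableEq V]

/-- The algebra map killing the two variables of the vertex `v`. -/
noncomputable def killV (v : V) :
    MvPolynomial (Fin 2 × V) K →ₐ[K] MvPolynomial (Fin 2 × V) K :=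
  aeval (fun w => if w.2 = v then 0 else X w)

lemma killV_X (v : V) (w : Fin 2 × V) :
    killV (K := K) v (X w) = if w.2 = v then 0 else X w := by
  simp [killV]

lemma killV_xv (v i : V) : killV (K := K) v (xv K i) = if i = v then 0 else xv K i := by
  simp [killV, xv]

lemma killV_yv (v i : V) : killV (K := K) v (yv K i) = if i = v then 0 else yv K i := by
  simp [killV, yv]

lemma killV_binom (v : V) {i j : V} (hi : i ≠ v) (hj : j ≠ v) :
    killV (K := K) v (binom K i j) = binom K i j := by
  simp [binom, killV_xv, killV_yv, hi, hj, map_sub, map_mul]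

lemma killV_of_mem_span_pair {v : V} {q : MvPolynomial (Fin 2 × V) K}
    (hq : q ∈ Ideal.span ({xv K v, yv K v} : Set (MvPolynomial (Fin 2 × V) K))) :
    killV (K := K) v q = 0 := by
  obtain ⟨a, b, rfl⟩ := Ideal.mem_span_pair.1 hq
  simp [map_add, map_mul, killV_xv, killV_yv]

lemma sub_killV_mem (v : V) (f : MvPolynomial (Fin 2 × V) K) :
    f - killV (K := K) v f ∈ Ideal.span ({xv K v, yv K v} : Set (MvPolynomial (Fin 2 × V) K)) := by
  induction f using MvPolynomial.induction_on with
  | C a => simp [killV]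
  | add f g hf hg =>
    have : f + g - killV (K := K) v (f + g) = (f - killV v f) + (g - killV v g) := by
      rw [map_add]; ring
    rw [this]
    exact Ideal.add_mem _ hf hg
  | mul_X f w hf =>
    by_cases hw : w.2 = v
    · have hX : X w ∈ Ideal.span ({xv K v, yv K v} : Set (MvPolynomial (Fin 2 × V) K)) := by
        obtain ⟨a, b⟩ := w
        have hb : b = v := hw
        subst hb
        refine Ideal.subset_span ?_
        fin_cases a
        · exact Set.mem_insert _ _
        · exact Set.mem_insert_of_mem _ rfl
      have : killV (K := K) v (f * X w) = 0 := by
        rw [map_mul, killV_X, if_pos hw, mul_zero]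
      rw [this, sub_zero]
      exact Ideal.mul_mem_left _ f hX
    · have : f * X w - killV (K := K) v (f * X w) = (f - killV v f) * X w := by
        rw [map_mul, killV_X, if_neg hw]; ring
      rw [this]
      exact Ideal.mul_mem_right _ _ hf

lemma killV_mem_PT {G₀ : SimpleGraph V} {v : V} (hiso : IsolatedIn G₀ v) {W : Finset V}
    (hW : v ∉ W) {f : MvPolynomial (Fin 2 × V) K} (hf : f ∈ PTIdeal K G₀ W) :
    killV (K := K) v f ∈ PTIdeal K G₀ W := by
  have hmap : Ideal.map (killV (K := K) v).toRingHom (PTIdeal K G₀ W) ≤ PTIdeal K G₀ W := by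
    rw [PTIdeal, Ideal.map_span, Ideal.span_le]
    rintro u hu
    simp only [Set.mem_image, Set.mem_union, Set.mem_setOf_eq] at hu
    obtain ⟨g, hg | hg, rfl⟩ := hu
    · obtain ⟨i, hi, hx | hy⟩ := hg
      · have hiv : i ≠ v := fun h => hW (h ▸ hi)
        subst hx
        simp only [AlgHom.toRingHom_eq_coe, RingHom.coe_coe, killV_xv, if_neg hiv]
        exact Ideal.subset_span (Or.inl ⟨i, hi, Or.inl rfl⟩)
      · have hiv : i ≠ v := fun h => hW (h ▸ hi)
        subst hy
        simp only [AlgHom.toRingHom_eq_coe, RingHom.coe_coe, killV_yv, if_neg hiv]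
        exact Ideal.subset_span (Or.inl ⟨i, hi, Or.inr rfl⟩)
    · obtain ⟨p, q, hp, hq, hpq, hr, rfl⟩ := hg
      have hpv : p ≠ v := by
        rintro rfl
        exact hpq ((hiso.delV_keep W).reachable_eq hr)
      have hqv : q ≠ v := by
        rintro rfl
        exact hpq ((hiso.delV_keep W).reachable_eq hr.symm).symm
      simp only [AlgHom.toRingHom_eq_coe, RingHom.coe_coe, killV_binom v hpv hqv]
      exact binom_mem_PT_reach hp hq hpq hr
  exact hmap (Ideal.mem_map_of_mem _ hf)

lemma PT_le_PT_insert {G₀ : SimpleGraph V} {v : V} (hiso : IsolatedIn G₀ v) (U : Finset V) :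
    PTIdeal K G₀ U ≤ PTIdeal K G₀ (insert v U) := by
  rw [PTIdeal, Ideal.span_le]
  rintro g hg
  rcases hg with ⟨i, hi, hx⟩ | ⟨p, q, hp, hq, hpq, hr, rfl⟩
  · exact Ideal.subset_span (Or.inl ⟨i, Finset.mem_insert_of_mem hi, hx⟩)
  · have hpv : p ≠ v := by
      rintro rfl
      exact hpq ((hiso.delV_keep U).reachable_eq hr)
    have hqv : q ≠ v := by
      rintro rfl
      exact hpq ((hiso.delV_keep U).reachable_eq hr.symm).symm
    have hr' : (delV G₀ (U ∪ {v})).Reachable p q := hiso.reachable_delV_union hpv hr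
    have huv : U ∪ {v} = insert v U := by
      ext a
      simp [Finset.mem_union, Finset.mem_insert, or_comm]
    rw [huv] at hr'
    exact binom_mem_PT_reach (by simp [Finset.mem_insert, hpv, hp])
      (by simp [Finset.mem_insert, hqv, hq]) hpq hr'

lemma PT_erase_le_PT {G₀ : SimpleGraph V} {v : V} (hiso : IsolatedIn G₀ v) (W : Finset V) :
    PTIdeal K G₀ (W.erase v) ≤ PTIdeal K G₀ W := by
  by_cases hv : v ∈ W
  · have h := PT_le_PT_insert (K := K) hiso (W.erase v)
    rwa [Finset.insert_erase hv] at h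
  · rw [Finset.erase_eq_of_notMem hv]

lemma delV_delV_erase {G : SimpleGraph V} {v : V} {T : Finset V} (hv : v ∈ T) :
    delV (delV G {v}) (T.erase v) = delV G T := by
  rw [delV_delV]
  congr 1
  ext a
  by_cases hav : a = v <;>
    simp [Finset.mem_union, Finset.mem_erase, hav, hv]

/-- Decomposition of `P_T(G)` for `v ∈ T`. -/
lemma PT_eq_sup_of_mem {G : SimpleGraph V} {v : V} {T : Finset V} (hv : v ∈ T) :
    PTIdeal K G T =
      Ideal.span ({xv K v, yv K v} : Set (MvPolynomial (Fin 2 × V) K)) ⊔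
        PTIdeal K (delV G {v}) (T.erase v) := by
  rw [PTIdeal, PTIdeal, ← Ideal.span_union, ← Set.union_assoc]
  congr 1
  rw [delV_delV_erase hv]
  apply Set.ext
  intro f
  simp only [Set.mem_union, Set.mem_setOf_eq, Set.mem_insert_iff, Set.mem_singleton_iff]
  constructor
  · rintro (⟨i, hi, hx⟩ | ⟨p, q, hp, hq, hpq, hr, rfl⟩)
    · by_cases hiv : i = v
      · subst hiv
        rcases hx with rfl | rfl
        · exact Or.inl (Or.inl (Or.inl rfl))
        · exact Or.inl (Or.inl (Or.inr rfl))
      · exact Or.inl (Or.inr ⟨i, Finset.mem_erase.2 ⟨hiv, hi⟩, hx⟩)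
    · exact Or.inr ⟨p, q, fun h => hp (Finset.mem_of_mem_erase h),
        fun h => hq (Finset.mem_of_mem_erase h), hpq, hr, rfl⟩
  · rintro (((rfl | rfl) | ⟨i, hi, hx⟩) | ⟨p, q, hp, hq, hpq, hr, rfl⟩)
    · exact Or.inl ⟨v, hv, Or.inl rfl⟩
    · exact Or.inl ⟨v, hv, Or.inr rfl⟩
    · exact Or.inl ⟨i, Finset.mem_of_mem_erase hi, hx⟩
    · have hpv : p ≠ v := by
        rintro rfl
        exact hpq ((isolatedIn_delV_self G hv).reachable_eq hr)
      have hqv : q ≠ v := by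
        rintro rfl
        exact hpq ((isolatedIn_delV_self G hv).reachable_eq hr.symm).symm
      refine Or.inr ⟨p, q, fun h => hp (Finset.mem_erase.2 ⟨hpv, h⟩),
        fun h => hq (Finset.mem_erase.2 ⟨hqv, h⟩), hpq, hr, rfl⟩

/-- `P_T(cliqueAt G v) = P_T(G)` for `v ∉ T`. -/
lemma PT_cliqueAt_eq {G : SimpleGraph V} {v : V} {T : Finset V} (hv : v ∉ T) :
    PTIdeal K (cliqueAt G v) T = PTIdeal K G T := by
  rw [PTIdeal, PTIdeal]
  congr 1
  apply Set.ext
  intro f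
  constructor
  · rintro (h | ⟨p, q, hp, hq, hpq, hr, rfl⟩)
    · exact Or.inl h
    · exact Or.inr ⟨p, q, hp, hq, hpq, (reachable_delV_cliqueAt_iff hv).1 hr, rfl⟩
  · rintro (h | ⟨p, q, hp, hq, hpq, hr, rfl⟩)
    · exact Or.inl h
    · exact Or.inr ⟨p, q, hp, hq, hpq, (reachable_delV_cliqueAt_iff hv).2 hr, rfl⟩

/-- In `cliqueAt G v`, `P_{W \ v} ⊆ P_W`. -/
lemma PT_cliqueAt_erase_le {G : SimpleGraph V} {v : V} {W : Finset V} (hv : v ∈ W) :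
    PTIdeal K (cliqueAt G v) (W.erase v) ≤ PTIdeal K (cliqueAt G v) W := by
  rw [PTIdeal, Ideal.span_le]
  rintro g (⟨i, hi, hx⟩ | ⟨p, q, hp, hq, hpq, hr, rfl⟩)
  · exact Ideal.subset_span (Or.inl ⟨i, Finset.mem_of_mem_erase hi, hx⟩)
  · by_cases hpv : p = v
    · subst hpv
      exact binom_mem_PT_left q hv
    · by_cases hqv : q = v
      · subst hqv
        exact binom_mem_PT_right p hv
      · have hpW : p ∉ W := fun h => hp (Finset.mem_erase.2 ⟨hpv, h⟩)
        have hqW : q ∉ W := fun h => hq (Finset.mem_erase.2 ⟨hqv, h⟩)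
        exact binom_mem_PT_reach hpW hqW hpq
          (reachable_delV_cliqueAt_erase hv hpv hqv hr)

end KillV
section Ohtani

open SimpleGraph

variable {K : Type*} [Field K] {V : Type*} [Fintype V] [DecidableEq V]

lemma delV_le (G : SimpleGraph V) (T : Finset V) : delV G T ≤ G := fun _ _ h => h.1

lemma delV_le_cliqueAt (G : SimpleGraph V) (v : V) : delV G {v} ≤ cliqueAt G v :=
  fun _ _ h => Or.inl h.1

/-- The new generators of `beIdeal (cliqueAt G v)`. -/
def newBinoms (K : Type*) [Field K] (G : SimpleGraph V) (v : V) :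
    Set (MvPolynomial (Fin 2 × V) K) :=
  {f | ∃ a b, G.Adj a v ∧ G.Adj b v ∧ a ≠ b ∧ f = binom K a b}

lemma beIdeal_cliqueAt_eq (G : SimpleGraph V) (v : V) :
    beIdeal K (cliqueAt G v) = beIdeal K G ⊔ Ideal.span (newBinoms K G v) := by
  rw [beIdeal, beIdeal, ← Ideal.span_union]
  congr 1
  apply Set.ext
  intro f
  simp only [Set.mem_union, Set.mem_setOf_eq, newBinoms]
  constructor
  · rintro ⟨i, j, h | ⟨hne, h1, h2⟩, rfl⟩
    · exact Or.inl ⟨i, j, h, rfl⟩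
    · exact Or.inr ⟨i, j, h1, h2, hne, rfl⟩
  · rintro (⟨i, j, h, rfl⟩ | ⟨i, j, h1, h2, hne, rfl⟩)
    · exact ⟨i, j, Or.inl h, rfl⟩
    · exact ⟨i, j, Or.inr ⟨hne, h1, h2⟩, rfl⟩

lemma pair_mul_binom_mem {G : SimpleGraph V} {v a b : V} (ha : G.Adj a v) (hb : G.Adj b v)
    {r : MvPolynomial (Fin 2 × V) K}
    (hr : r ∈ Ideal.span ({xv K v, yv K v} : Set (MvPolynomial (Fin 2 × V) K))) :
    r * binom K a b ∈ beIdeal K G := by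
  obtain ⟨α, β, rfl⟩ := Ideal.mem_span_pair.1 hr
  have hx : xv K v * binom K a b ∈ beIdeal K G := by
    rw [plucker_x]
    exact Ideal.add_mem _ (Ideal.mul_mem_left _ _ (binom_mem_beIdeal hb.symm))
      (Ideal.mul_mem_left _ _ (binom_mem_beIdeal ha))
  have hy : yv K v * binom K a b ∈ beIdeal K G := by
    rw [plucker_y]
    exact Ideal.add_mem _ (Ideal.mul_mem_left _ _ (binom_mem_beIdeal hb.symm))
      (Ideal.mul_mem_left _ _ (binom_mem_beIdeal ha))
  have : (α * xv K v + β * yv K v) * binom K a b =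
      α * (xv K v * binom K a b) + β * (yv K v * binom K a b) := by ring
  rw [this]
  exact Ideal.add_mem _ (Ideal.mul_mem_left _ _ hx) (Ideal.mul_mem_left _ _ hy)

lemma pair_mul_newBinoms_mem {G : SimpleGraph V} {v : V} {r m : MvPolynomial (Fin 2 × V) K}
    (hr : r ∈ Ideal.span ({xv K v, yv K v} : Set (MvPolynomial (Fin 2 × V) K)))
    (hm : m ∈ Ideal.span (newBinoms K G v)) : r * m ∈ beIdeal K G := by
  induction hm using Submodule.span_induction with
  | mem g hg =>
    obtain ⟨a, b, ha, hb, _, rfl⟩ := hg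
    exact pair_mul_binom_mem ha hb hr
  | zero => simpa using Ideal.zero_mem _
  | add g₁ g₂ _ _ h1 h2 =>
    rw [mul_add]
    exact Ideal.add_mem _ h1 h2
  | smul c g _ h =>
    rw [smul_eq_mul, mul_comm c g, ← mul_assoc]
    exact Ideal.mul_mem_right _ _ h

lemma killV_beIdeal_le {G : SimpleGraph V} {v : V} {f : MvPolynomial (Fin 2 × V) K}
    (hf : f ∈ beIdeal K G) : killV (K := K) v f ∈ beIdeal K (delV G {v}) := by
  have hmap : Ideal.map (killV (K := K) v).toRingHom (beIdeal K G) ≤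
      beIdeal K (delV G {v}) := by
    rw [beIdeal, Ideal.map_span, Ideal.span_le]
    rintro u hu
    simp only [Set.mem_image, Set.mem_setOf_eq] at hu
    obtain ⟨g, ⟨i, j, hij, rfl⟩, rfl⟩ := hu
    by_cases hi : i = v
    · subst hi
      have : killV (K := K) i (binom K i j) = 0 := by
        simp [binom, map_sub, map_mul, killV_xv, killV_yv]
      simp only [AlgHom.toRingHom_eq_coe, RingHom.coe_coe, this]
      exact Ideal.zero_mem _
    · by_cases hj : j = v
      · subst hj
        have : killV (K := K) j (binom K i j) = 0 := by
          simp [binom, map_sub, map_mul, killV_xv, killV_yv]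
        simp only [AlgHom.toRingHom_eq_coe, RingHom.coe_coe, this]
        exact Ideal.zero_mem _
      · simp only [AlgHom.toRingHom_eq_coe, RingHom.coe_coe, killV_binom v hi hj]
        exact binom_mem_beIdeal ⟨hij, by simp [hi], by simp [hj]⟩
  exact hmap (Ideal.mem_map_of_mem _ hf)

lemma newBinoms_sub_killV {G : SimpleGraph V} {v : V} {m : MvPolynomial (Fin 2 × V) K}
    (hm : m ∈ Ideal.span (newBinoms K G v)) :
    m - killV (K := K) v m ∈ beIdeal K G ∧ killV (K := K) v m ∈ Ideal.span (newBinoms K G v) := by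
  induction hm using Submodule.span_induction with
  | mem g hg =>
    obtain ⟨a, b, ha, hb, hab, rfl⟩ := hg
    have hav : a ≠ v := fun h => G.loopless.irrefl v (h ▸ ha)
    have hbv : b ≠ v := fun h => G.loopless.irrefl v (h ▸ hb)
    rw [killV_binom v hav hbv]
    exact ⟨by simpa using Ideal.zero_mem _, Ideal.subset_span ⟨a, b, ha, hb, hab, rfl⟩⟩
  | zero => exact ⟨by simpa using Ideal.zero_mem _, by simpa using Ideal.zero_mem _⟩
  | add g₁ g₂ _ _ h1 h2 =>
    constructor
    · have : g₁ + g₂ - killV (K := K) v (g₁ + g₂) =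
          (g₁ - killV v g₁) + (g₂ - killV v g₂) := by rw [map_add]; ring
      rw [this]
      exact Ideal.add_mem _ h1.1 h2.1
    · rw [map_add]
      exact Ideal.add_mem _ h1.2 h2.2
  | smul c g _ h =>
    constructor
    · have : c • g - killV (K := K) v (c • g) =
          c * (g - killV v g) + (c - killV v c) * killV v g := by
        simp only [smul_eq_mul, map_mul]
        ring
      rw [this]
      exact Ideal.add_mem _ (Ideal.mul_mem_left _ _ h.1)
        (pair_mul_newBinoms_mem (sub_killV_mem v c) h.2)
    · rw [smul_eq_mul, map_mul]
      exact Ideal.mul_mem_left _ _ h.2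

/-- Ohtani's lemma. -/
lemma ohtani (G : SimpleGraph V) (v : V) :
    beIdeal K (cliqueAt G v) ⊓
      (Ideal.span ({xv K v, yv K v} : Set (MvPolynomial (Fin 2 × V) K)) ⊔
        beIdeal K (delV G {v})) ≤ beIdeal K G := by
  intro f hf
  obtain ⟨hf1, hf2⟩ := Ideal.mem_inf.1 hf
  obtain ⟨q, hq, g, hg, rfl⟩ := Submodule.mem_sup.1 hf2
  have hgG : g ∈ beIdeal K G := beIdeal_mono (delV_le G {v}) hg
  have hqGv : q ∈ beIdeal K (cliqueAt G v) := by
    have hgGv : g ∈ beIdeal K (cliqueAt G v) := beIdeal_mono (delV_le_cliqueAt G v) hg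
    have : q = q + g - g := by ring
    rw [this]
    exact Ideal.sub_mem _ hf1 hgGv
  rw [beIdeal_cliqueAt_eq] at hqGv
  obtain ⟨u, hu, m, hm, hum⟩ := Submodule.mem_sup.1 hqGv
  obtain ⟨hm1, hm2⟩ := newBinoms_sub_killV (K := K) hm
  -- kill v in q = u + m : killV q = 0, so killV m = - killV u ∈ J_{G'} ⊆ J_G
  have hkq : killV (K := K) v q = 0 := killV_of_mem_span_pair hq
  have hkm : killV (K := K) v m = - killV v u := by
    have := congrArg (killV (K := K) v) hum
    rw [map_add, hkq] at this
    linear_combination this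
  have hkmG : killV (K := K) v m ∈ beIdeal K G := by
    rw [hkm]
    exact Submodule.neg_mem _ (beIdeal_mono (delV_le G {v}) (killV_beIdeal_le hu))
  have hmG : m ∈ beIdeal K G := by
    have : m = (m - killV (K := K) v m) + killV v m := by ring
    rw [this]
    exact Ideal.add_mem _ hm1 hkmG
  have hqG : q ∈ beIdeal K G := by
    rw [← hum]
    exact Ideal.add_mem _ hu hmG
  exact Ideal.add_mem _ hqG hgG

/-- Base case : `P_∅(G) = J_G` when reachability implies adjacency. -/
lemma PT_empty_eq {G : SimpleGraph V}
    (hG : ∀ a b c, G.Adj a b → G.Adj b c → a ≠ c → G.Adj a c) :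
    PTIdeal K G ∅ = beIdeal K G := by
  refine le_antisymm ?_ (beIdeal_le_PT G ∅)
  rw [PTIdeal, Ideal.span_le]
  rintro f (⟨i, hi, _⟩ | ⟨p, q, _, _, hpq, hr, rfl⟩)
  · exact absurd hi (Finset.notMem_empty i)
  · exact binom_mem_beIdeal (adj_of_cliqueish hG hr hpq)

end Ohtani
section Main

open SimpleGraph

variable {K : Type*} [Field K] {V : Type*} [Fintype V] [DecidableEq V]

/-- The set of non-isolated vertices. -/
def suppS (G : SimpleGraph V) : Set V := {w | ∃ u, G.Adj w u}

/-- The set of non-adjacent ordered pairs of distinct vertices. -/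
def missS (G : SimpleGraph V) : Set (V × V) := {p | p.1 ≠ p.2 ∧ ¬ G.Adj p.1 p.2}

/-- The induction measure. -/
noncomputable def mu (G : SimpleGraph V) : ℕ :=
  (suppS G).ncard * (Fintype.card (V × V) + 1) + (missS G).ncard

lemma suppS_cliqueAt_subset (G : SimpleGraph V) (v : V) :
    suppS (cliqueAt G v) ⊆ suppS G := by
  rintro w ⟨u, h | ⟨_, h1, _⟩⟩
  · exact ⟨u, h⟩
  · exact ⟨v, h1⟩

lemma missS_cliqueAt_ssubset {G : SimpleGraph V} {v a b : V} (ha : G.Adj a v)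
    (hb : G.Adj b v) (hab : a ≠ b) (hnadj : ¬ G.Adj a b) :
    missS (cliqueAt G v) ⊂ missS G := by
  constructor
  · rintro ⟨p, q⟩ ⟨h1, h2⟩
    exact ⟨h1, fun h => h2 (Or.inl h)⟩
  · intro hsub
    have hmem : (a, b) ∈ missS G := ⟨hab, hnadj⟩
    have := hsub hmem
    exact this.2 (Or.inr ⟨hab, ha, hb⟩)

lemma suppS_delV_ssubset {G : SimpleGraph V} {v u : V} (h : G.Adj v u) :
    suppS (delV G {v}) ⊂ suppS G := by
  constructor
  · rintro w ⟨u', h'⟩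
    exact ⟨u', h'.1⟩
  · intro hsub
    have hv : v ∈ suppS G := ⟨u, h⟩
    obtain ⟨u', h'⟩ := hsub hv
    exact h'.2.1 (Finset.mem_singleton_self v)

lemma missS_ncard_le (G : SimpleGraph V) : (missS G).ncard ≤ Fintype.card (V × V) := by
  have := Set.ncard_le_ncard (Set.subset_univ (missS G)) Set.finite_univ
  rwa [Set.ncard_univ, Nat.card_eq_fintype_card] at this

lemma mu_cliqueAt_lt {G : SimpleGraph V} {v a b : V} (ha : G.Adj a v)
    (hb : G.Adj b v) (hab : a ≠ b) (hnadj : ¬ G.Adj a b) :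
    mu (cliqueAt G v) < mu G := by
  have h1 : (suppS (cliqueAt G v)).ncard ≤ (suppS G).ncard :=
    Set.ncard_le_ncard (suppS_cliqueAt_subset G v) (Set.toFinite _)
  have h2 : (missS (cliqueAt G v)).ncard < (missS G).ncard :=
    Set.ncard_lt_ncard (missS_cliqueAt_ssubset ha hb hab hnadj) (Set.toFinite _)
  unfold mu
  have := Nat.mul_le_mul_right (Fintype.card (V × V) + 1) h1
  omega

lemma mu_delV_lt {G : SimpleGraph V} {v u : V} (h : G.Adj v u) :
    mu (delV G {v}) < mu G := by
  have h1 : (suppS (delV G {v})).ncard < (suppS G).ncard :=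
    Set.ncard_lt_ncard (suppS_delV_ssubset h) (Set.toFinite _)
  have h2 := missS_ncard_le (delV G {v})
  unfold mu
  set M := Fintype.card (V × V) + 1 with hM
  calc (suppS (delV G {v})).ncard * M + (missS (delV G {v})).ncard
      < (suppS (delV G {v})).ncard * M + M := by omega
    _ = ((suppS (delV G {v})).ncard + 1) * M := by ring
    _ ≤ (suppS G).ncard * M := Nat.mul_le_mul_right M h1
    _ ≤ (suppS G).ncard * M + (missS G).ncard := Nat.le_add_right _ _

/-- The main induction: the intersection of all the `P_T` is contained in `J_G`. -/
theorem iInf_PT_le_beIdeal (G : SimpleGraph V) :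
    (⨅ T : Finset V, PTIdeal K G T) ≤ beIdeal K G := by
  suffices H : ∀ (N : ℕ) (G : SimpleGraph V), mu G < N →
      (⨅ T : Finset V, PTIdeal K G T) ≤ beIdeal K G from
    H (mu G + 1) G (Nat.lt_succ_self _)
  intro N
  induction N with
  | zero => exact fun G h => absurd h (Nat.not_lt_zero _)
  | succ N ih =>
    intro G hmu
    by_cases hbase : ∀ a b c, G.Adj a b → G.Adj b c → a ≠ c → G.Adj a c
    · calc (⨅ T : Finset V, PTIdeal K G T) ≤ PTIdeal K G ∅ := iInf_le _ ∅
        _ = beIdeal K G := PT_empty_eq hbase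
    · push_neg at hbase
      obtain ⟨a, v, b, hav, hvb, hab, hnadj⟩ := hbase
      have hiso : IsolatedIn (delV G {v}) v := isolatedIn_delV_singleton G v
      have hmuGv : mu (cliqueAt G v) < N := by
        have := mu_cliqueAt_lt hav hvb.symm hab hnadj
        omega
      have hmuG' : mu (delV G {v}) < N := by
        have := mu_delV_lt hvb
        omega
      intro f hf
      have hfT : ∀ T : Finset V, f ∈ PTIdeal K G T := fun T => (Submodule.mem_iInf _).1 hf T
      -- f belongs to J_{G_v}
      have hfGv : f ∈ beIdeal K (cliqueAt G v) := by
        refine ih (cliqueAt G v) hmuGv ?_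
        refine (Submodule.mem_iInf _).2 fun T => ?_
        have h1 : f ∈ PTIdeal K (cliqueAt G v) (T.erase v) := by
          rw [PT_cliqueAt_eq (Finset.notMem_erase v T)]
          exact hfT (T.erase v)
        by_cases hvT : v ∈ T
        · exact PT_cliqueAt_erase_le hvT h1
        · rwa [Finset.erase_eq_of_notMem hvT] at h1
      -- f belongs to (x_v, y_v) + J_{G - v}
      have hfQ : f ∈ Ideal.span ({xv K v, yv K v} : Set (MvPolynomial (Fin 2 × V) K)) ⊔
          beIdeal K (delV G {v}) := by
        have hkf : killV (K := K) v f ∈ beIdeal K (delV G {v}) := by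
          refine ih (delV G {v}) hmuG' ?_
          refine (Submodule.mem_iInf _).2 fun W => ?_
          have h1 : f ∈ PTIdeal K G (insert v W) := hfT (insert v W)
          rw [PT_eq_sup_of_mem (Finset.mem_insert_self v W)] at h1
          obtain ⟨q, hq, g, hg, rfl⟩ := Submodule.mem_sup.1 h1
          have hkg : killV (K := K) v (q + g) = killV v g := by
            rw [map_add, killV_of_mem_span_pair hq, zero_add]
          rw [hkg]
          have h2 : killV (K := K) v g ∈ PTIdeal K (delV G {v}) ((insert v W).erase v) := by
            refine killV_mem_PT hiso (Finset.notMem_erase v _) hg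
          have h3 : PTIdeal K (delV G {v}) ((insert v W).erase v) ≤
              PTIdeal K (delV G {v}) W := by
            rw [Finset.erase_insert_eq_erase]
            exact PT_erase_le_PT hiso W
          exact h3 h2
        refine Submodule.mem_sup.2 ⟨f - killV (K := K) v f, sub_killV_mem v f,
          killV (K := K) v f, hkf, by ring⟩
      exact ohtani G v (Ideal.mem_inf.2 ⟨hfGv, hfQ⟩)

end Main
section CutPoint

open SimpleGraph

variable {K : Type*} [Field K] {V : Type*} [Fintype V] [DecidableEq V]

lemma cCount_lt_of_merge {G : SimpleGraph V} {T : Finset V} {i : V} (hi : i ∈ T) {a b : V}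
    (ha : a ∉ T) (hb : b ∉ T) (hr' : (delV G (T.erase i)).Reachable a b)
    (hnr : ¬ (delV G T).Reachable a b) : cCount G (T.erase i) < cCount G T := by
  classical
  set H := delV G T with hH
  set H' := delV G (T.erase i) with hH'
  let hhom : H →g H' := ⟨id, fun hadj =>
    ⟨hadj.1, fun h => hadj.2.1 (Finset.mem_of_mem_erase h),
      fun h => hadj.2.2 (Finset.mem_of_mem_erase h)⟩⟩
  -- the walk from a to b in H' must pass through i
  obtain ⟨w⟩ := hr'
  have hiw : i ∈ w.support := by
    by_contra hiw
    refine hnr (reachable_delV_of_avoid (Finset.erase_subset i T) w ?_)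
    intro x hx hxe
    have : x = i := by
      by_contra hxi
      exact hxe (Finset.mem_erase.2 ⟨hxi, hx⟩)
    rwa [this]
  have hrai : H'.Reachable a i := ⟨w.takeUntil i hiw⟩
  -- the induced map on counted components
  let D := {c : H.ConnectedComponent // ∃ v, v ∉ T ∧ H.connectedComponentMk v = c}
  let D' := {c : H'.ConnectedComponent // ∃ v, v ∉ T.erase i ∧ H'.connectedComponentMk v = c}
  let φ : D → D' := fun c =>
    ⟨c.1.map hhom, by
      obtain ⟨c, v, hv, rfl⟩ := c
      exact ⟨v, fun h => hv (Finset.mem_of_mem_erase h), (ConnectedComponent.map_mk _ _).symm ▸ rfl⟩⟩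
  have hsurj : Function.Surjective φ := by
    rintro ⟨c', v, hv, rfl⟩
    by_cases hvT : v ∈ T
    · have hvi : v = i := by
        by_contra hvi
        exact hv (Finset.mem_erase.2 ⟨hvi, hvT⟩)
      refine ⟨⟨H.connectedComponentMk a, a, ha, rfl⟩, ?_⟩
      apply Subtype.ext
      show (H.connectedComponentMk a).map hhom = H'.connectedComponentMk v
      rw [ConnectedComponent.map_mk]
      exact ConnectedComponent.sound (hvi ▸ hrai)
    · refine ⟨⟨H.connectedComponentMk v, v, hvT, rfl⟩, ?_⟩
      apply Subtype.ext
      show (H.connectedComponentMk v).map hhom = H'.connectedComponentMk v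
      rw [ConnectedComponent.map_mk]
      rfl
  have hninj : ¬ Function.Injective φ := by
    intro hinj
    have hab : (⟨H.connectedComponentMk a, a, ha, rfl⟩ : D) =
        ⟨H.connectedComponentMk b, b, hb, rfl⟩ := by
      apply hinj
      apply Subtype.ext
      show (H.connectedComponentMk a).map hhom = (H.connectedComponentMk b).map hhom
      rw [ConnectedComponent.map_mk, ConnectedComponent.map_mk]
      exact ConnectedComponent.sound ⟨w⟩
    have := congrArg Subtype.val hab
    exact hnr (ConnectedComponent.exact this)
  -- conclude the strict inequality of cardinalities
  have hle : Nat.card D' ≤ Nat.card D := Nat.card_le_card_of_surjective φ hsurj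
  rcases lt_or_eq_of_le hle with h | h
  · exact h
  · exfalso
    refine hninj ((Nat.bijective_iff_surjective_and_card φ).2 ⟨hsurj, h.symm⟩).injective
  
lemma PT_erase_le_of_not_cut {G : SimpleGraph V} {T : Finset V} {i : V} (hi : i ∈ T)
    (hnot : ¬ cCount G (T.erase i) < cCount G T) :
    PTIdeal K G (T.erase i) ≤ PTIdeal K G T := by
  rw [PTIdeal, Ideal.span_le]
  rintro f (⟨j, hj, hx⟩ | ⟨p, q, hp, hq, hpq, hr, rfl⟩)
  · exact Ideal.subset_span (Or.inl ⟨j, Finset.mem_of_mem_erase hj, hx⟩)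
  · by_cases hpi : p = i
    · exact hpi ▸ binom_mem_PT_left q hi
    · by_cases hqi : q = i
      · exact hqi ▸ binom_mem_PT_right p hi
      · have hpT : p ∉ T := fun h => hp (Finset.mem_erase.2 ⟨hpi, h⟩)
        have hqT : q ∉ T := fun h => hq (Finset.mem_erase.2 ⟨hqi, h⟩)
        by_cases hre : (delV G T).Reachable p q
        · exact binom_mem_PT_reach hpT hqT hpq hre
        · exact absurd (cCount_lt_of_merge hi hpT hqT hr hre) hnot

lemma exists_cutPoint_PT_le (G : SimpleGraph V) (T : Finset V) :
    ∃ T' : Finset V, hasCutPointProperty G T' ∧ PTIdeal K G T' ≤ PTIdeal K G T := by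
  induction T using Finset.strongInduction with
  | _ T ih =>
    by_cases h : hasCutPointProperty G T
    · exact ⟨T, h, le_rfl⟩
    · rw [hasCutPointProperty] at h
      push_neg at h
      obtain ⟨i, hi, hnot⟩ := h
      obtain ⟨T', h1, h2⟩ := ih (T.erase i) (Finset.erase_ssubset hi)
      exact ⟨T', h1, h2.trans (PT_erase_le_of_not_cut hi (not_lt.2 hnot))⟩

end CutPoint
section Prime

open SimpleGraph
open scoped Classical

variable {K : Type*} [Field K] {V : Type*} [Fintype V] [DecidableEq V]

/-- The substitution function underlying the Segre-type map. -/
noncomputable def phiFun (K : Type*) [Field K] {V : Type*} [Fintype V] [DecidableEq V]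
    (G : SimpleGraph V) (T : Finset V) (w : Fin 2 × V) :
    MvPolynomial ((Fin 2 × (delV G T).ConnectedComponent) ⊕ V) K :=
  if w.2 ∈ T then 0 else
    X (Sum.inl (w.1, (delV G T).connectedComponentMk w.2)) * X (Sum.inr w.2)

/-- The Segre-type map whose kernel is `P_T(G)`. -/
noncomputable def Phi (K : Type*) [Field K] {V : Type*} [Fintype V] [DecidableEq V]
    (G : SimpleGraph V) (T : Finset V) :
    MvPolynomial (Fin 2 × V) K →ₐ[K]
      MvPolynomial ((Fin 2 × (delV G T).ConnectedComponent) ⊕ V) K :=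
  aeval (phiFun K G T)

/-- `d` avoids the variables of `T`. -/
def TFree (T : Finset V) (d : (Fin 2 × V) →₀ ℕ) : Prop := ∀ w : Fin 2 × V, w.2 ∈ T → d w = 0

/-- The image exponent of a `T`-free exponent. -/
noncomputable def Fmap (K : Type*) [Field K] {V : Type*} [Fintype V] [DecidableEq V]
    (G : SimpleGraph V) (T : Finset V) (d : (Fin 2 × V) →₀ ℕ) :
    ((Fin 2 × (delV G T).ConnectedComponent) ⊕ V) →₀ ℕ :=
  d.sum fun w k =>
    Finsupp.single (Sum.inl (w.1, (delV G T).connectedComponentMk w.2)) k +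
      Finsupp.single (Sum.inr w.2) k

lemma Phi_xv {G : SimpleGraph V} {T : Finset V} {i : V} (hi : i ∈ T) :
    Phi K G T (xv K i) = 0 := by
  simp [Phi, xv, phiFun, hi]

lemma Phi_yv {G : SimpleGraph V} {T : Finset V} {i : V} (hi : i ∈ T) :
    Phi K G T (yv K i) = 0 := by
  simp [Phi, yv, phiFun, hi]

lemma Phi_binom_eq_zero {G : SimpleGraph V} {T : Finset V} {i j : V} (hi : i ∉ T) (hj : j ∉ T)
    (hr : (delV G T).Reachable i j) : Phi K G T (binom K i j) = 0 := by
  have hc : (delV G T).connectedComponentMk i = (delV G T).connectedComponentMk j :=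
    ConnectedComponent.sound hr
  simp only [binom, xv, yv, map_sub, map_mul, Phi, aeval_X, phiFun, if_neg hi, if_neg hj, hc]
  ring

lemma PT_le_ker (G : SimpleGraph V) (T : Finset V) :
    PTIdeal K G T ≤ RingHom.ker (Phi K G T).toRingHom := by
  rw [PTIdeal, Ideal.span_le]
  rintro f (⟨i, hi, hx | hy⟩ | ⟨p, q, hp, hq, hpq, hr, rfl⟩)
  · subst hx
    simp [RingHom.mem_ker, Phi_xv hi]
  · subst hy
    simp [RingHom.mem_ker, Phi_yv hi]
  · simp [RingHom.mem_ker, Phi_binom_eq_zero hp hq hr]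

lemma Fmap_zero (G : SimpleGraph V) (T : Finset V) : Fmap K G T 0 = 0 := by
  simp [Fmap]

lemma Fmap_add_single (G : SimpleGraph V) (T : Finset V) (w : Fin 2 × V) (k : ℕ)
    (f : (Fin 2 × V) →₀ ℕ) (hw : w ∉ f.support) :
    Fmap K G T (Finsupp.single w k + f) =
      Finsupp.single (Sum.inl (w.1, (delV G T).connectedComponentMk w.2)) k +
        Finsupp.single (Sum.inr w.2) k + Fmap K G T f := by
  have hzero : ∀ a : Fin 2 × V,
      (Finsupp.single (Sum.inl (a.1, (delV G T).connectedComponentMk a.2)) 0 +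
        Finsupp.single (Sum.inr a.2) (0 : ℕ)) = 0 := by
    intro a
    simp
  have hadd : ∀ (a : Fin 2 × V) (b₁ b₂ : ℕ),
      (Finsupp.single (Sum.inl (a.1, (delV G T).connectedComponentMk a.2)) (b₁ + b₂) +
        Finsupp.single (Sum.inr a.2) (b₁ + b₂)) =
      (Finsupp.single (Sum.inl (a.1, (delV G T).connectedComponentMk a.2)) b₁ +
        Finsupp.single (Sum.inr a.2) b₁) +
      (Finsupp.single (Sum.inl (a.1, (delV G T).connectedComponentMk a.2)) b₂ +
        Finsupp.single (Sum.inr a.2) b₂) := by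
    intro a b₁ b₂
    rw [Finsupp.single_add, Finsupp.single_add]
    exact add_add_add_comm _ _ _ _
  rw [Fmap, Finsupp.sum_add_index' hzero hadd, Finsupp.sum_single_index (hzero w)]
  rfl

lemma Phi_monomial_tfree {G : SimpleGraph V} {T : Finset V} {d : (Fin 2 × V) →₀ ℕ}
    (hd : TFree T d) :
    Phi K G T (monomial d 1) = monomial (Fmap K G T d) 1 := by
  induction d using Finsupp.induction with
  | zero => simp [Phi, Fmap_zero]
  | single_add w k f hwf hk ih =>
    have hwT : w.2 ∉ T := by
      intro hmem
      have h := hd w hmem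
      rw [Finsupp.add_apply, Finsupp.single_apply, if_pos rfl] at h
      exact hk (by omega)
    have hf : TFree T f := by
      intro u hu
      have h := hd u hu
      rw [Finsupp.add_apply] at h
      omega
    rw [Fmap_add_single G T w k f hwf]
    have h1 : Phi K G T (monomial (Finsupp.single w k + f) 1) =
        Phi K G T (monomial (Finsupp.single w k) 1) * Phi K G T (monomial f 1) := by
      rw [← map_mul, monomial_mul, mul_one]
    rw [h1, ih hf]
    have h2 : Phi K G T (monomial (Finsupp.single w k) 1) =
        monomial (Finsupp.single (Sum.inl (w.1, (delV G T).connectedComponentMk w.2)) k +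
          Finsupp.single (Sum.inr w.2) k) 1 := by
      rw [← X_pow_eq_monomial, map_pow]
      simp only [Phi, aeval_X, phiFun, if_neg hwT]
      rw [mul_pow, X_pow_eq_monomial, X_pow_eq_monomial, monomial_mul, mul_one]
    rw [h2, monomial_mul, mul_one]

lemma Phi_monomial_not_tfree {G : SimpleGraph V} {T : Finset V} {d : (Fin 2 × V) →₀ ℕ}
    (hd : ¬ TFree T d) (c : K) : Phi K G T (monomial d c) = 0 := by
  rw [TFree] at hd
  push_neg at hd
  obtain ⟨w, hwT, hw0⟩ := hd
  simp only [Phi, aeval_monomial]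
  have : (d.prod fun w k => phiFun K G T w ^ k) = 0 := by
    refine Finset.prod_eq_zero (Finsupp.mem_support_iff.2 hw0) ?_
    simp only [phiFun, if_pos hwT]
    exact zero_pow hw0
  rw [this, mul_zero]

lemma Fmap_apply_inr (G : SimpleGraph V) (T : Finset V) (d : (Fin 2 × V) →₀ ℕ) (i : V) :
    Fmap K G T d (Sum.inr i) = d (0, i) + d (1, i) := by
  rw [Fmap, Finsupp.sum_apply]
  have h1 : ∀ w : Fin 2 × V,
      ((Finsupp.single (Sum.inl (w.1, (delV G T).connectedComponentMk w.2)) (d w) +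
        Finsupp.single (Sum.inr w.2) (d w)) :
        ((Fin 2 × (delV G T).ConnectedComponent) ⊕ V) →₀ ℕ) (Sum.inr i) =
      if w.2 = i then d w else 0 := by
    intro w
    simp [Finsupp.single_apply]
  rw [Finsupp.sum, Finset.sum_congr rfl fun w _ => h1 w]
  rw [Finset.sum_subset (Finset.subset_univ d.support) (fun w _ hw => by
    simp only [Finsupp.notMem_support_iff] at hw
    simp [hw])]
  rw [Fintype.sum_prod_type]
  have h2 : ∀ a : Fin 2, (∑ j : V, if ((a, j) : Fin 2 × V).2 = i then d (a, j) else 0)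
      = d (a, i) := by
    intro a
    rw [Finset.sum_ite_eq' Finset.univ i (fun j => d (a, j))]
    simp
  rw [Finset.sum_congr rfl fun a _ => h2 a, Fin.sum_univ_two]

lemma Fmap_apply_inl (G : SimpleGraph V) (T : Finset V) (d : (Fin 2 × V) →₀ ℕ) (a : Fin 2)
    (c : (delV G T).ConnectedComponent) :
    Fmap K G T d (Sum.inl (a, c)) =
      ∑ j : V, if (delV G T).connectedComponentMk j = c then d (a, j) else 0 := by
  rw [Fmap, Finsupp.sum_apply]
  have h1 : ∀ w : Fin 2 × V,
      ((Finsupp.single (Sum.inl (w.1, (delV G T).connectedComponentMk w.2)) (d w) +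
        Finsupp.single (Sum.inr w.2) (d w)) :
        ((Fin 2 × (delV G T).ConnectedComponent) ⊕ V) →₀ ℕ) (Sum.inl (a, c)) =
      if w.1 = a ∧ (delV G T).connectedComponentMk w.2 = c then d w else 0 := by
    intro w
    simp only [Finsupp.add_apply, Finsupp.single_apply]
    split_ifs with h1 h2 h2 <;> simp_all [Prod.ext_iff]
  rw [Finsupp.sum, Finset.sum_congr rfl fun w _ => h1 w]
  rw [Finset.sum_subset (Finset.subset_univ d.support) (fun w _ hw => by
    simp only [Finsupp.notMem_support_iff] at hw
    simp [hw])]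
  rw [Fintype.sum_prod_type]
  have h2 : ∀ a' : Fin 2, (∑ j : V,
      if ((a', j) : Fin 2 × V).1 = a ∧
        (delV G T).connectedComponentMk ((a', j) : Fin 2 × V).2 = c then d (a', j) else 0) =
      if a' = a then (∑ j : V, if (delV G T).connectedComponentMk j = c then d (a', j) else 0)
        else 0 := by
    intro a'
    by_cases ha' : a' = a
    · subst ha'
      simp
    · simp [ha']
  rw [Finset.sum_congr rfl fun a' _ => h2 a']
  rw [Finset.sum_ite_eq' Finset.univ a
    (fun a' => ∑ j : V, if (delV G T).connectedComponentMk j = c then d (a', j) else 0)]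
  simp

end Prime
section Alpha

open SimpleGraph
open scoped Classical

variable {K : Type*} [Field K] {V : Type*} [Fintype V] [DecidableEq V]

/-- Discrepancy between two exponents. -/
noncomputable def Ddist (d d' : (Fin 2 × V) →₀ ℕ) : ℕ :=
  ∑ w : Fin 2 × V, ((d w : ℤ) - (d' w : ℤ)).natAbs

lemma Ddist_comm (d d' : (Fin 2 × V) →₀ ℕ) : Ddist d d' = Ddist d' d := by
  unfold Ddist
  refine Finset.sum_congr rfl fun w _ => ?_
  omega

lemma Ddist_eq_zero {d d' : (Fin 2 × V) →₀ ℕ} (h : Ddist d d' = 0) : d = d' := by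
  unfold Ddist at h
  rw [Finset.sum_eq_zero_iff] at h
  ext w
  have := h w (Finset.mem_univ w)
  omega

lemma X_eq_monomial (s : Fin 2 × V) :
    (X s : MvPolynomial (Fin 2 × V) K) = monomial (Finsupp.single s 1) 1 := by
  rw [← pow_one (X s), X_pow_eq_monomial]

lemma alpha_step {G : SimpleGraph V} {T : Finset V} {d d' : (Fin 2 × V) →₀ ℕ}
    (hT : TFree T d) (hT' : TFree T d') (hF : Fmap K G T d = Fmap K G T d') {i : V}
    (hi : d' (0, i) < d (0, i)) :
    ∃ dt : (Fin 2 × V) →₀ ℕ, TFree T dt ∧ Fmap K G T dt = Fmap K G T d ∧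
      monomial d (1 : K) - monomial dt 1 ∈ PTIdeal K G T ∧ Ddist dt d' < Ddist d d' := by
  have hiT : i ∉ T := by
    intro h
    have := hT (0, i) h
    omega
  have hm : ∀ k : V, d (0, k) + d (1, k) = d' (0, k) + d' (1, k) := by
    intro k
    have h1 := Fmap_apply_inr (K := K) G T d k
    have h2 := Fmap_apply_inr (K := K) G T d' k
    rw [hF] at h1
    omega
  have h1i : d (1, i) < d' (1, i) := by have := hm i; omega
  have hsum : (∑ j : V, if (delV G T).connectedComponentMk j =
        (delV G T).connectedComponentMk i then d (0, j) else 0) =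
      ∑ j : V, if (delV G T).connectedComponentMk j =
        (delV G T).connectedComponentMk i then d' (0, j) else 0 := by
    have h1 := Fmap_apply_inl (K := K) G T d 0 ((delV G T).connectedComponentMk i)
    have h2 := Fmap_apply_inl (K := K) G T d' 0 ((delV G T).connectedComponentMk i)
    rw [hF] at h1
    exact h1.symm.trans h2
  have hpivot : ∃ j : V, j ≠ i ∧ (delV G T).connectedComponentMk j =
      (delV G T).connectedComponentMk i ∧ d (0, j) < d' (0, j) := by
    by_contra hcon
    push_neg at hcon
    have hlt : (∑ j : V, if (delV G T).connectedComponentMk j =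
          (delV G T).connectedComponentMk i then d' (0, j) else 0) <
        ∑ j : V, if (delV G T).connectedComponentMk j =
          (delV G T).connectedComponentMk i then d (0, j) else 0 := by
      refine Finset.sum_lt_sum (fun j _ => ?_) ⟨i, Finset.mem_univ i, ?_⟩
      · by_cases hji : j = i
        · subst hji
          simp only [if_pos rfl, if_true, eq_self_iff_true]
          omega
        · by_cases hjc : (delV G T).connectedComponentMk j =
              (delV G T).connectedComponentMk i
          · simpa [hjc] using hcon j hji hjc
          · simp [hjc]
      · simp only [if_pos rfl, if_true, eq_self_iff_true]
        omega
    omega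
  obtain ⟨j, hji, hjc, hj⟩ := hpivot
  have hjT : j ∉ T := by
    intro h
    have := hT' (0, j) h
    omega
  have h1j : d' (1, j) < d (1, j) := by have := hm j; omega
  have hrij : (delV G T).Reachable i j := (ConnectedComponent.exact hjc).symm
  set d2 : (Fin 2 × V) →₀ ℕ :=
    d - Finsupp.single ((0 : Fin 2), i) 1 - Finsupp.single ((1 : Fin 2), j) 1 with hd2
  set dt : (Fin 2 × V) →₀ ℕ :=
    d2 + (Finsupp.single ((0 : Fin 2), j) 1 + Finsupp.single ((1 : Fin 2), i) 1) with hdt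
  have hd0i : 1 ≤ d (0, i) := by omega
  have hd1j : 1 ≤ d (1, j) := by omega
  have hdtw : ∀ w : Fin 2 × V, dt w =
      if ((0 : Fin 2), i) = w then d w - 1 else if ((1 : Fin 2), j) = w then d w - 1
      else if ((0 : Fin 2), j) = w then d w + 1 else if ((1 : Fin 2), i) = w then d w + 1
      else d w := by
    intro w
    rw [hdt, hd2]
    simp only [Finsupp.add_apply, Finsupp.tsub_apply, Finsupp.single_apply]
    by_cases h1 : ((0 : Fin 2), i) = w
    · rw [← h1]
      simp [Prod.ext_iff, hji, Ne.symm hji]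
    · by_cases h2 : ((1 : Fin 2), j) = w
      · rw [← h2]
        simp [Prod.ext_iff, hji, Ne.symm hji]
      · by_cases h3 : ((0 : Fin 2), j) = w
        · rw [← h3]
          simp [Prod.ext_iff, hji, Ne.symm hji]
        · by_cases h4 : ((1 : Fin 2), i) = w
          · rw [← h4]
            simp [Prod.ext_iff, hji, Ne.symm hji]
          · simp [h1, h2, h3, h4]
  have hexp : d = d2 + (Finsupp.single ((0 : Fin 2), i) 1 +
      Finsupp.single ((1 : Fin 2), j) 1) := by
    ext w
    rw [hd2]
    simp only [Finsupp.add_apply, Finsupp.tsub_apply, Finsupp.single_apply]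
    by_cases h1 : ((0 : Fin 2), i) = w
    · rw [← h1]
      simp [Prod.ext_iff, hji, Ne.symm hji]
      omega
    · by_cases h2 : ((1 : Fin 2), j) = w
      · rw [← h2]
        simp [Prod.ext_iff, hji, Ne.symm hji]
        omega
      · simp [h1, h2]
  have hmonod : (monomial d (1 : K)) = monomial d2 1 * (xv K i * yv K j) := by
    rw [xv, yv, X_eq_monomial, X_eq_monomial, monomial_mul, monomial_mul, mul_one, mul_one,
      ← hexp]
  have hmonodt : (monomial dt (1 : K)) = monomial d2 1 * (xv K j * yv K i) := by
    rw [xv, yv, X_eq_monomial, X_eq_monomial, monomial_mul, monomial_mul, mul_one, mul_one,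
      hdt]
  have hdiff : monomial d (1 : K) - monomial dt 1 = monomial d2 1 * binom K i j := by
    rw [binom, mul_sub, hmonod, hmonodt]
  have hmem : monomial d (1 : K) - monomial dt 1 ∈ PTIdeal K G T := by
    rw [hdiff]
    exact Ideal.mul_mem_left _ _ (binom_mem_PT_reach hiT hjT (fun h => hji h.symm) hrij)
  have hTdt : TFree T dt := by
    intro w hw
    rw [hdtw w]
    split_ifs with h1 h2 h3 h4
    · rw [← h1] at hw
      exact absurd hw hiT
    · rw [← h2] at hw
      exact absurd hw hjT
    · rw [← h3] at hw
      exact absurd hw hjT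
    · rw [← h4] at hw
      exact absurd hw hiT
    · exact hT w hw
  have hFdt : Fmap K G T dt = Fmap K G T d := by
    have h0 : Phi K G T (monomial d (1 : K) - monomial dt 1) = 0 := by
      rw [hdiff, map_mul, Phi_binom_eq_zero hiT hjT hrij, mul_zero]
    rw [map_sub] at h0
    have hPhi := sub_eq_zero.1 h0
    rw [Phi_monomial_tfree hT, Phi_monomial_tfree hTdt] at hPhi
    rcases (monomial_eq_monomial_iff _ _ _ _).1 hPhi with ⟨h, _⟩ | ⟨h, _⟩
    · exact h.symm
    · exact absurd h one_ne_zero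
  refine ⟨dt, hTdt, hFdt, hmem, ?_⟩
  unfold Ddist
  refine Finset.sum_lt_sum (fun w _ => ?_) ⟨((0 : Fin 2), i), Finset.mem_univ _, ?_⟩
  · rw [hdtw w]
    split_ifs with h1 h2 h3 h4
    · rw [← h1]
      omega
    · rw [← h2]
      omega
    · rw [← h3]
      omega
    · rw [← h4]
      omega
    · exact le_rfl
  · rw [hdtw ((0 : Fin 2), i), if_pos rfl]
    omega

lemma alpha {G : SimpleGraph V} {T : Finset V} :
    ∀ (N : ℕ) (d d' : (Fin 2 × V) →₀ ℕ), Ddist d d' ≤ N → TFree T d → TFree T d' →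
      Fmap K G T d = Fmap K G T d' →
      monomial d (1 : K) - monomial d' 1 ∈ PTIdeal K G T := by
  intro N
  induction N with
  | zero =>
    intro d d' hD _ _ _
    rw [Ddist_eq_zero (Nat.le_zero.1 hD), sub_self]
    exact Ideal.zero_mem _
  | succ N ih =>
    intro d d' hD hT hT' hF
    by_cases hdd : d = d'
    · rw [hdd, sub_self]
      exact Ideal.zero_mem _
    · have hex : ∃ i : V, d (0, i) ≠ d' (0, i) := by
        by_contra hcon
        push_neg at hcon
        refine hdd (Finsupp.ext fun w => ?_)
        obtain ⟨a, k⟩ := w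
        have hmk : d (0, k) + d (1, k) = d' (0, k) + d' (1, k) := by
          have h1 := Fmap_apply_inr (K := K) G T d k
          have h2 := Fmap_apply_inr (K := K) G T d' k
          rw [hF] at h1
          omega
        have h0 := hcon k
        have ha : a = 0 ∨ a = 1 := by
          fin_cases a
          · exact Or.inl rfl
          · exact Or.inr rfl
        rcases ha with rfl | rfl
        · exact h0
        · omega
      obtain ⟨i, hi⟩ := hex
      rcases lt_or_gt_of_ne hi with h | h
      · -- d (0,i) < d' (0,i) : apply the step to d'
        obtain ⟨dt, hTdt, hFdt, hmem, hlt⟩ := alpha_step hT' hT hF.symm h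
        have hrec : monomial d (1 : K) - monomial dt 1 ∈ PTIdeal K G T := by
          refine ih d dt ?_ hT hTdt (hF.trans hFdt.symm)
          have e1 : Ddist d dt = Ddist dt d := Ddist_comm _ _
          have e2 : Ddist d' d = Ddist d d' := Ddist_comm _ _
          omega
        have hout : monomial d (1 : K) - monomial d' 1 =
            (monomial d (1 : K) - monomial dt 1) - (monomial d' 1 - monomial dt 1) := by
          ring
        rw [hout]
        exact Ideal.sub_mem _ hrec hmem
      · obtain ⟨dt, hTdt, hFdt, hmem, hlt⟩ := alpha_step hT hT' hF h
        have hrec : monomial dt (1 : K) - monomial d' 1 ∈ PTIdeal K G T := by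
          exact ih dt d' (by omega) hTdt hT' (hFdt.trans hF)
        have hout : monomial d (1 : K) - monomial d' 1 =
            (monomial d (1 : K) - monomial dt 1) + (monomial dt 1 - monomial d' 1) := by
          ring
        rw [hout]
        exact Ideal.add_mem _ hmem hrec

end Alpha
section Ker

open SimpleGraph
open scoped Classical

variable {K : Type*} [Field K] {V : Type*} [Fintype V] [DecidableEq V]

lemma monomial_not_tfree_mem {G : SimpleGraph V} {T : Finset V} {d : (Fin 2 × V) →₀ ℕ}
    (hd : ¬ TFree T d) (c : K) : monomial d c ∈ PTIdeal K G T := by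
  rw [TFree] at hd
  push_neg at hd
  obtain ⟨w, hwT, hw0⟩ := hd
  have hXw : (X w : MvPolynomial (Fin 2 × V) K) ∈ PTIdeal K G T := by
    obtain ⟨a, t⟩ := w
    have ha : a = 0 ∨ a = 1 := by
      fin_cases a
      · exact Or.inl rfl
      · exact Or.inr rfl
    rcases ha with rfl | rfl
    · exact Ideal.subset_span (Or.inl ⟨t, hwT, Or.inl rfl⟩)
    · exact Ideal.subset_span (Or.inl ⟨t, hwT, Or.inr rfl⟩)
  have hdd : (d - Finsupp.single w 1) + Finsupp.single w 1 = d := by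
    ext u
    rw [Finsupp.add_apply, Finsupp.tsub_apply, Finsupp.single_apply]
    by_cases hwu : w = u
    · subst hwu
      rw [if_pos rfl]
      omega
    · simp [hwu]
  have hdec : monomial d c = monomial (d - Finsupp.single w 1) c * X w := by
    rw [X_eq_monomial, monomial_mul, mul_one, hdd]
  rw [hdec]
  exact Ideal.mul_mem_left _ _ hXw

lemma monomial_eq_C_mul {d : (Fin 2 × V) →₀ ℕ} (c : K) :
    monomial d c = C c * monomial d 1 := by
  rw [C_mul_monomial, mul_one]

lemma Phi_C (G : SimpleGraph V) (T : Finset V) (c : K) : Phi K G T (C c) = C c := by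
  simp [Phi, aeval_C, algebraMap_eq]

lemma ker_aux (G : SimpleGraph V) (T : Finset V) :
    ∀ (n : ℕ) (f : MvPolynomial (Fin 2 × V) K), Phi K G T f = 0 →
      f.support.card ≤ n → f ∈ PTIdeal K G T := by
  intro n
  induction n with
  | zero =>
    intro f _ hcard
    have h1 : f.support = ∅ := Finset.card_eq_zero.1 (Nat.le_zero.1 hcard)
    rw [MvPolynomial.support_eq_empty.1 h1]
    exact Ideal.zero_mem _
  | succ n ih =>
    intro f hker hcard
    by_cases hf0 : f = 0
    · rw [hf0]
      exact Ideal.zero_mem _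
    obtain ⟨d₀, hd₀⟩ := MvPolynomial.support_nonempty.2 hf0
    by_cases hT0 : TFree T d₀
    · -- the fiber of d₀
      set e := Fmap K G T d₀ with he
      set F := f.support.filter (fun d => TFree T d ∧ Fmap K G T d = e) with hFdef
      have hd₀F : d₀ ∈ F := Finset.mem_filter.2 ⟨hd₀, hT0, rfl⟩
      have hPhif : Phi K G T f =
          ∑ d ∈ f.support, C (coeff d f) * Phi K G T (monomial d 1) := by
        conv_lhs => rw [← support_sum_monomial_coeff f]
        rw [map_sum]
        refine Finset.sum_congr rfl fun d _ => ?_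
        rw [monomial_eq_C_mul, map_mul, Phi_C]
      have hcoeffe : coeff e (Phi K G T f) = ∑ d ∈ F, coeff d f := by
        rw [hPhif, MvPolynomial.coeff_sum]
        rw [← Finset.sum_filter_add_sum_filter_not f.support
          (fun d => TFree T d ∧ Fmap K G T d = e)]
        have hz : ∀ d ∈ f.support.filter (fun d => ¬(TFree T d ∧ Fmap K G T d = e)),
            coeff e (C (coeff d f) * Phi K G T (monomial d 1)) = 0 := by
          intro d hd
          obtain ⟨-, hd2⟩ := Finset.mem_filter.1 hd
          rw [coeff_C_mul]
          by_cases hdT : TFree T d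
          · have hne : Fmap K G T d ≠ e := fun h => hd2 ⟨hdT, h⟩
            rw [Phi_monomial_tfree hdT, coeff_monomial, if_neg hne, mul_zero]
          · rw [Phi_monomial_not_tfree hdT, MvPolynomial.coeff_zero, mul_zero]
        rw [Finset.sum_eq_zero hz, add_zero]
        rw [← hFdef]
        refine Finset.sum_congr rfl fun d hd => ?_
        obtain ⟨-, hdT, hdF⟩ := Finset.mem_filter.1 hd
        rw [coeff_C_mul, Phi_monomial_tfree hdT, hdF, coeff_monomial, if_pos rfl, mul_one]
      have hsum0 : ∑ d ∈ F, coeff d f = 0 := by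
        rw [← hcoeffe, hker, MvPolynomial.coeff_zero]
      set g := ∑ d ∈ F, monomial d (coeff d f) with hg
      have hgP : g ∈ PTIdeal K G T := by
        have hrw : g = ∑ d ∈ F, (monomial d (coeff d f) - monomial d₀ (coeff d f)) := by
          rw [Finset.sum_sub_distrib]
          have h2 : ∑ d ∈ F, monomial d₀ (coeff d f) = monomial d₀ (∑ d ∈ F, coeff d f) :=
            (map_sum (monomial d₀) _ _).symm
          rw [h2, hsum0, map_zero, sub_zero]
        rw [hrw]
        refine Ideal.sum_mem _ fun d hd => ?_
        obtain ⟨-, hdT, hdF⟩ := Finset.mem_filter.1 hd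
        have h3 : monomial d (coeff d f) - monomial d₀ (coeff d f) =
            C (coeff d f) * (monomial d 1 - monomial d₀ 1) := by
          rw [mul_sub, ← monomial_eq_C_mul, ← monomial_eq_C_mul]
        rw [h3]
        exact Ideal.mul_mem_left _ _
          (alpha (Ddist d d₀) d d₀ le_rfl hdT hT0 (hdF.trans he))
      have hPhig : Phi K G T g = 0 := by
        rw [hg, map_sum]
        have h4 : ∀ d ∈ F, Phi K G T (monomial d (coeff d f)) =
            C (coeff d f) * monomial e 1 := by
          intro d hd
          obtain ⟨-, hdT, hdF⟩ := Finset.mem_filter.1 hd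
          rw [monomial_eq_C_mul, map_mul, Phi_C, Phi_monomial_tfree hdT, hdF]
        rw [Finset.sum_congr rfl h4, ← Finset.sum_mul, ← map_sum C _ F, hsum0, map_zero,
          zero_mul]
      have hker' : Phi K G T (f - g) = 0 := by
        rw [map_sub, hker, hPhig, sub_zero]
      have hsub : (f - g).support ⊆ f.support.erase d₀ := by
        intro d hd
        rw [MvPolynomial.mem_support_iff, MvPolynomial.coeff_sub] at hd
        have hcg : coeff d g = if d ∈ F then coeff d f else 0 := by
          rw [hg, MvPolynomial.coeff_sum]
          have h5 : ∀ d' ∈ F, coeff d (monomial d' (coeff d' f)) =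
              if d' = d then coeff d' f else 0 := fun d' _ => coeff_monomial _ _ _
          rw [Finset.sum_congr rfl h5, Finset.sum_ite_eq' F d (fun d' => coeff d' f)]
        rw [Finset.mem_erase]
        constructor
        · intro hdd₀
          subst hdd₀
          rw [hcg, if_pos hd₀F, sub_self] at hd
          exact hd rfl
        · by_contra hdf
          rw [MvPolynomial.notMem_support_iff] at hdf
          have hdF : d ∉ F := by
            intro h
            exact (MvPolynomial.mem_support_iff.1 (Finset.mem_filter.1 h).1) hdf
          rw [hcg, if_neg hdF, hdf, sub_zero] at hd
          exact hd rfl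
      have hcard' : (f - g).support.card ≤ n := by
        have h6 := Finset.card_le_card hsub
        rw [Finset.card_erase_of_mem hd₀] at h6
        omega
      have h7 := ih (f - g) hker' hcard'
      have h8 : f = (f - g) + g := by ring
      rw [h8]
      exact Ideal.add_mem _ h7 hgP
    · -- d₀ is not T-free : strip the offending monomial
      set g := monomial d₀ (coeff d₀ f) with hg
      have hgP : g ∈ PTIdeal K G T := monomial_not_tfree_mem hT0 _
      have hker' : Phi K G T (f - g) = 0 := by
        rw [map_sub, hker, hg, Phi_monomial_not_tfree hT0, sub_zero]
      have hsub : (f - g).support ⊆ f.support.erase d₀ := by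
        intro d hd
        rw [MvPolynomial.mem_support_iff, MvPolynomial.coeff_sub, hg] at hd
        rw [Finset.mem_erase]
        constructor
        · intro hdd₀
          subst hdd₀
          rw [coeff_monomial, if_pos rfl, sub_self] at hd
          exact hd rfl
        · by_contra hdf
          rw [MvPolynomial.notMem_support_iff] at hdf
          have hne : d₀ ≠ d := by
            intro h
            subst h
            exact (MvPolynomial.mem_support_iff.1 hd₀) hdf
          rw [coeff_monomial, if_neg hne, hdf, sub_zero] at hd
          exact hd rfl
      have hcard' : (f - g).support.card ≤ n := by
        have h6 := Finset.card_le_card hsub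
        rw [Finset.card_erase_of_mem hd₀] at h6
        omega
      have h7 := ih (f - g) hker' hcard'
      have h8 : f = (f - g) + g := by ring
      rw [h8]
      exact Ideal.add_mem _ h7 hgP

theorem PT_eq_ker (G : SimpleGraph V) (T : Finset V) :
    PTIdeal K G T = RingHom.ker (Phi K G T).toRingHom := by
  refine le_antisymm (PT_le_ker G T) ?_
  intro f hf
  rw [RingHom.mem_ker] at hf
  simp only [AlgHom.toRingHom_eq_coe, RingHom.coe_coe] at hf
  exact ker_aux G T f.support.card f hf le_rfl

theorem PT_isPrime (G : SimpleGraph V) (T : Finset V) : (PTIdeal K G T).IsPrime := by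
  rw [PT_eq_ker]
  exact RingHom.ker_isPrime _

end Ker
/-- `J_G` is a radical ideal and
`J_G = ⋂_{T ∈ C(G)} P_T(G)`, where `C(G)` is the family of subsets with the cut point
property for `G`. -/
theorem beIdeal_radical_decomposition (K : Type*) [Field K] (n : ℕ)
    (G : SimpleGraph (Fin n)) :
    (beIdeal K G).IsRadical ∧
      beIdeal K G = ⨅ T ∈ {T : Finset (Fin n) | hasCutPointProperty G T}, PTIdeal K G T := by
  have hle1 : beIdeal K G ≤
      ⨅ T ∈ {T : Finset (Fin n) | hasCutPointProperty G T}, PTIdeal K G T :=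
    le_iInf₂ fun T _ => beIdeal_le_PT G T
  have hle2 : (⨅ T ∈ {T : Finset (Fin n) | hasCutPointProperty G T}, PTIdeal K G T) ≤
      beIdeal K G := by
    refine le_trans (le_iInf fun T => ?_) (iInf_PT_le_beIdeal G)
    obtain ⟨T', hT', hle⟩ := exists_cutPoint_PT_le (K := K) G T
    exact le_trans (iInf₂_le T' hT') hle
  have heq : beIdeal K G =
      ⨅ T ∈ {T : Finset (Fin n) | hasCutPointProperty G T}, PTIdeal K G T :=
    le_antisymm hle1 hle2
  refine ⟨?_, heq⟩
  rw [← Ideal.radical_eq_iff, heq]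
  refine le_antisymm ?_ Ideal.le_radical
  refine le_iInf₂ fun T hT => ?_
  calc (⨅ T ∈ {T : Finset (Fin n) | hasCutPointProperty G T}, PTIdeal K G T).radical
      ≤ (PTIdeal K G T).radical := Ideal.radical_mono (iInf₂_le T hT)
    _ = PTIdeal K G T := (PT_isPrime G T).radical
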